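/- (Lemma on projections of H² functions.) Let ψ ∈ H²(0,1) ∩ H₀¹(0,1) and let Pψ = Σᵢ ξⁱ vⁱ be its L²-orthogonal projection onto the piecewise linear finite element space V on the uniform mesh with M subintervals. Then (Δx Σᵢ (D²ξ)ᵢ²)^{1/2} ≤ C ‖ψ''‖_{L²(0,1)} with C independent of Δx. -/

import Mathlib

open MeasureTheory intervalIntegral

/-- The nodal hat basis function at node `i Δx`, `Δx = 1/M`. -/
noncomputable def hatFn (M i : ℕ) (x : ℝ) : ℝ := max 0 (1 - |(M : ℝ) * x - (i : ℝ)|)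

/-- The piecewise linear function with nodal values `ξ i`. -/
noncomputable def plf (M : ℕ) (ξ : ℕ → ℝ) (x : ℝ) : ℝ :=
  ∑ i ∈ Finset.Icc 1 (M - 1), ξ i * hatFn M i x

/-- The second difference quotient `(D²ξ)ᵢ = (ξ_{i+1} - 2ξᵢ + ξ_{i-1})/Δx²`, `Δx = 1/M`. -/
noncomputable def d2q (M : ℕ) (ξ : ℕ → ℝ) (i : ℕ) : ℝ :=
  (M : ℝ) ^ 2 * (ξ (i + 1) - 2 * ξ i + ξ (i - 1))

noncomputable def hfun (u : ℝ) : ℝ := max 0 (1 - |u|)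

lemma hatFn_eq (M i : ℕ) (x : ℝ) : hatFn M i x = hfun ((M:ℝ)*x - i) := rfl

lemma hfun_cont : Continuous hfun := by
  unfold hfun; fun_prop

lemma hfun_nonneg (u : ℝ) : 0 ≤ hfun u := le_max_left _ _

lemma hfun_zero {u : ℝ} (h : 1 ≤ |u|) : hfun u = 0 := by
  unfold hfun; rw [max_eq_left]; linarith

lemma abs_lt_of_hfun_ne {u : ℝ} (h : hfun u ≠ 0) : |u| < 1 := by
  by_contra hc
  exact h (hfun_zero (not_lt.mp hc))

lemma hfun_left {u : ℝ} (h1 : -1 ≤ u) (h2 : u ≤ 0) : hfun u = 1 + u := by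
  unfold hfun
  rw [abs_of_nonpos h2, max_eq_right (by linarith)]; ring

lemma hfun_right {u : ℝ} (h1 : 0 ≤ u) (h2 : u ≤ 1) : hfun u = 1 - u := by
  unfold hfun
  rw [abs_of_nonneg h1, max_eq_right (by linarith)]

lemma hfun_le_one (u : ℝ) : hfun u ≤ 1 := by
  unfold hfun
  rcases le_total 0 (1 - |u|) with h | h
  · rw [max_eq_right h]; have := abs_nonneg u; linarith
  · rw [max_eq_left h]; norm_num

lemma integral_quadratic (p q r a b : ℝ) :
    ∫ u in a..b, (p + q*u + r*u^2) =
      (p*b + q*b^2/2 + r*b^3/3) - (p*a + q*a^2/2 + r*a^3/3) := by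
  have h : ∀ u : ℝ, HasDerivAt (fun v => p*v + q*v^2/2 + r*v^3/3) (p + q*u + r*u^2) u := by
    intro u
    have h1 : HasDerivAt (fun v : ℝ => p*v) p u := by
      simpa using (hasDerivAt_id u).const_mul p
    have h2 : HasDerivAt (fun v : ℝ => q*v^2/2) (q*u) u := by
      have := ((hasDerivAt_pow 2 u).const_mul q).div_const 2
      exact this.congr_deriv (by norm_num; ring)
    have h3 : HasDerivAt (fun v : ℝ => r*v^3/3) (r*u^2) u := by
      have := ((hasDerivAt_pow 3 u).const_mul r).div_const 3
      exact this.congr_deriv (by norm_num; ring)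
    exact (h1.add h2).add h3
  rw [intervalIntegral.integral_eq_sub_of_hasDerivAt (fun u _ => h u)]
  exact (Continuous.intervalIntegrable (by fun_prop) a b)


lemma integral_comp_hat (M j : ℕ) (hM : 2 ≤ M) (hj1 : 1 ≤ j) (hj2 : j ≤ M - 1)
    (f : ℝ → ℝ) (hf : Continuous f) (h0 : ∀ u, 1 ≤ |u| → f u = 0) :
    ∫ x in (0:ℝ)..1, f ((M:ℝ)*x - j) = (1/(M:ℝ)) * ∫ u in (-1:ℝ)..1, f u := by
  have hM0 : (M:ℝ) ≠ 0 := by positivity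
  rw [intervalIntegral.integral_comp_mul_sub f hM0 (j:ℝ)]
  have hj : (1:ℝ) ≤ (j:ℝ) := by exact_mod_cast hj1
  have hjM : (j:ℝ) + 1 ≤ (M:ℝ) := by
    have : j + 1 ≤ M := by omega
    exact_mod_cast this
  have e1 : (M:ℝ) * 0 - j = -(j:ℝ) := by ring
  have e2 : (M:ℝ) * 1 - j = (M:ℝ) - j := by ring
  rw [e1, e2]
  have i1 : IntervalIntegrable f volume (-(j:ℝ)) (-1) := hf.intervalIntegrable _ _
  have i2 : IntervalIntegrable f volume (-1) 1 := hf.intervalIntegrable _ _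
  have i3 : IntervalIntegrable f volume 1 ((M:ℝ) - j) := hf.intervalIntegrable _ _
  have z1 : ∫ u in (-(j:ℝ))..(-1), f u = 0 := by
    rw [show (0:ℝ) = ∫ u in (-(j:ℝ))..(-1), (0:ℝ) from (intervalIntegral.integral_zero).symm]
    apply intervalIntegral.integral_congr
    intro u hu
    rw [Set.uIcc_of_le (by linarith)] at hu
    exact h0 u (by rw [abs_of_nonpos (by linarith [hu.2])]; linarith [hu.2])
  have z3 : ∫ u in (1:ℝ)..((M:ℝ) - j), f u = 0 := by
    rw [show (0:ℝ) = ∫ u in (1:ℝ)..((M:ℝ)-j), (0:ℝ) from (intervalIntegral.integral_zero).symm]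
    apply intervalIntegral.integral_congr
    intro u hu
    rw [Set.uIcc_of_le (by linarith)] at hu
    exact h0 u (by rw [abs_of_nonneg (by linarith [hu.1])]; exact hu.1)
  have split1 : ∫ u in (-(j:ℝ))..1, f u = (∫ u in (-(j:ℝ))..(-1), f u) + ∫ u in (-1:ℝ)..1, f u :=
    (intervalIntegral.integral_add_adjacent_intervals i1 i2).symm
  have split2 : ∫ u in (-(j:ℝ))..((M:ℝ)-j), f u
      = (∫ u in (-(j:ℝ))..1, f u) + ∫ u in (1:ℝ)..((M:ℝ)-j), f u :=
    (intervalIntegral.integral_add_adjacent_intervals (i1.trans i2) i3).symm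
  rw [split2, split1, z1, z3, smul_eq_mul]
  ring

lemma int_hfun_sq : ∫ u in (-1:ℝ)..1, hfun u * hfun u = 2/3 := by
  have i1 : IntervalIntegrable (fun u => hfun u * hfun u) volume (-1) 0 :=
    (hfun_cont.mul hfun_cont).intervalIntegrable _ _
  have i2 : IntervalIntegrable (fun u => hfun u * hfun u) volume 0 1 :=
    (hfun_cont.mul hfun_cont).intervalIntegrable _ _
  rw [← intervalIntegral.integral_add_adjacent_intervals i1 i2]
  have e1 : ∫ u in (-1:ℝ)..0, hfun u * hfun u = ∫ u in (-1:ℝ)..0, (1 + 2*u + 1*u^2) := by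
    apply intervalIntegral.integral_congr
    intro u hu
    rw [Set.uIcc_of_le (by norm_num)] at hu
    simp only [hfun_left hu.1 hu.2]; ring
  have e2 : ∫ u in (0:ℝ)..1, hfun u * hfun u = ∫ u in (0:ℝ)..1, (1 + (-2)*u + 1*u^2) := by
    apply intervalIntegral.integral_congr
    intro u hu
    rw [Set.uIcc_of_le (by norm_num)] at hu
    simp only [hfun_right hu.1 hu.2]; ring
  rw [e1, e2, integral_quadratic, integral_quadratic]; norm_num

lemma int_hfun_shift : ∫ u in (-1:ℝ)..1, hfun u * hfun (u - 1) = 1/6 := by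
  have i1 : IntervalIntegrable (fun u => hfun u * hfun (u-1)) volume (-1) 0 :=
    (hfun_cont.mul (hfun_cont.comp (by fun_prop))).intervalIntegrable _ _
  have i2 : IntervalIntegrable (fun u => hfun u * hfun (u-1)) volume 0 1 :=
    (hfun_cont.mul (hfun_cont.comp (by fun_prop))).intervalIntegrable _ _
  rw [← intervalIntegral.integral_add_adjacent_intervals i1 i2]
  have e1 : ∫ u in (-1:ℝ)..0, hfun u * hfun (u-1) = ∫ u in (-1:ℝ)..0, (0 + 0*u + 0*u^2) := by
    apply intervalIntegral.integral_congr
    intro u hu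
    rw [Set.uIcc_of_le (by norm_num)] at hu
    simp only [hfun_zero (u := u - 1) (by rw [abs_of_nonpos (by linarith [hu.2])]; linarith [hu.2])]
    ring
  have e2 : ∫ u in (0:ℝ)..1, hfun u * hfun (u-1) = ∫ u in (0:ℝ)..1, (0 + 1*u + (-1)*u^2) := by
    apply intervalIntegral.integral_congr
    intro u hu
    rw [Set.uIcc_of_le (by norm_num)] at hu
    have h1 : hfun u = 1 - u := hfun_right hu.1 hu.2
    have h2 : hfun (u - 1) = 1 + (u - 1) := hfun_left (by linarith [hu.1]) (by linarith [hu.2])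
    simp only [h1, h2]; ring
  rw [e1, e2, integral_quadratic, integral_quadratic]; norm_num

lemma int_hfun_shift' : ∫ u in (-1:ℝ)..1, hfun u * hfun (u + 1) = 1/6 := by
  have i1 : IntervalIntegrable (fun u => hfun u * hfun (u+1)) volume (-1) 0 :=
    (hfun_cont.mul (hfun_cont.comp (by fun_prop))).intervalIntegrable _ _
  have i2 : IntervalIntegrable (fun u => hfun u * hfun (u+1)) volume 0 1 :=
    (hfun_cont.mul (hfun_cont.comp (by fun_prop))).intervalIntegrable _ _
  rw [← intervalIntegral.integral_add_adjacent_intervals i1 i2]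
  have e1 : ∫ u in (-1:ℝ)..0, hfun u * hfun (u+1) = ∫ u in (-1:ℝ)..0, (0 + (-1)*u + (-1)*u^2) := by
    apply intervalIntegral.integral_congr
    intro u hu
    rw [Set.uIcc_of_le (by norm_num)] at hu
    have h1 : hfun u = 1 + u := hfun_left hu.1 hu.2
    have h2 : hfun (u + 1) = 1 - (u + 1) := hfun_right (by linarith [hu.1]) (by linarith [hu.2])
    simp only [h1, h2]; ring
  have e2 : ∫ u in (0:ℝ)..1, hfun u * hfun (u+1) = ∫ u in (0:ℝ)..1, (0 + 0*u + 0*u^2) := by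
    apply intervalIntegral.integral_congr
    intro u hu
    rw [Set.uIcc_of_le (by norm_num)] at hu
    simp only [hfun_zero (u := u + 1) (by rw [abs_of_nonneg (by linarith [hu.1])]; linarith [hu.1])]
    ring
  rw [e1, e2, integral_quadratic, integral_quadratic]; norm_num

lemma int_affine_hfun (a b : ℝ) : ∫ u in (-1:ℝ)..1, (a + b*u) * hfun u = a := by
  have i1 : IntervalIntegrable (fun u => (a + b*u) * hfun u) volume (-1) 0 :=
    ((continuous_const.add (continuous_const.mul continuous_id)).mul hfun_cont).intervalIntegrable _ _
  have i2 : IntervalIntegrable (fun u => (a + b*u) * hfun u) volume 0 1 :=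
    ((continuous_const.add (continuous_const.mul continuous_id)).mul hfun_cont).intervalIntegrable _ _
  rw [← intervalIntegral.integral_add_adjacent_intervals i1 i2]
  have e1 : ∫ u in (-1:ℝ)..0, (a + b*u) * hfun u = ∫ u in (-1:ℝ)..0, (a + (a+b)*u + b*u^2) := by
    apply intervalIntegral.integral_congr
    intro u hu
    rw [Set.uIcc_of_le (by norm_num)] at hu
    simp only [hfun_left hu.1 hu.2]; ring
  have e2 : ∫ u in (0:ℝ)..1, (a + b*u) * hfun u = ∫ u in (0:ℝ)..1, (a + (b-a)*u + (-b)*u^2) := by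
    apply intervalIntegral.integral_congr
    intro u hu
    rw [Set.uIcc_of_le (by norm_num)] at hu
    simp only [hfun_right hu.1 hu.2]; ring
  rw [e1, e2, integral_quadratic, integral_quadratic]; ring

lemma hat_cont (M i : ℕ) : Continuous (hatFn M i) := by
  unfold hatFn; fun_prop

lemma hat_nonneg (M i : ℕ) (x : ℝ) : 0 ≤ hatFn M i x := le_max_left _ _

lemma abs_lt_of_hat_ne {M i : ℕ} {x : ℝ} (h : hatFn M i x ≠ 0) : |(M:ℝ)*x - i| < 1 :=
  abs_lt_of_hfun_ne h

lemma int_hat_sq (M j : ℕ) (hM : 2 ≤ M) (hj1 : 1 ≤ j) (hj2 : j ≤ M - 1) :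
    ∫ x in (0:ℝ)..1, hatFn M j x * hatFn M j x = 2/(3*(M:ℝ)) := by
  have h := integral_comp_hat M j hM hj1 hj2 (fun u => hfun u * hfun u)
    (hfun_cont.mul hfun_cont) (fun u hu => by simp only [hfun_zero hu, zero_mul])
  rw [show (∫ x in (0:ℝ)..1, hatFn M j x * hatFn M j x)
      = ∫ x in (0:ℝ)..1, (fun u => hfun u * hfun u) ((M:ℝ)*x - j) from rfl, h, int_hfun_sq]
  ring

lemma int_hat_adj (M j : ℕ) (hM : 2 ≤ M) (hj1 : 1 ≤ j) (hj2 : j + 1 ≤ M - 1) :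
    ∫ x in (0:ℝ)..1, hatFn M j x * hatFn M (j+1) x = 1/(6*(M:ℝ)) := by
  have h := integral_comp_hat M j hM hj1 (by omega) (fun u => hfun u * hfun (u - 1))
    (hfun_cont.mul (hfun_cont.comp (by fun_prop)))
    (fun u hu => by simp only [hfun_zero hu, zero_mul])
  have e : ∀ x : ℝ, hatFn M j x * hatFn M (j+1) x
      = (fun u => hfun u * hfun (u - 1)) ((M:ℝ)*x - j) := by
    intro x
    simp only [hatFn_eq]
    congr 2
    push_cast; ring
  rw [intervalIntegral.integral_congr (fun x _ => e x), h, int_hfun_shift]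
  ring

lemma int_hat_far (M j k : ℕ) (h : j + 2 ≤ k) (x : ℝ) : hatFn M j x * hatFn M k x = 0 := by
  by_cases hj : hatFn M j x = 0
  · rw [hj, zero_mul]
  · have h1 := abs_lt_of_hat_ne hj
    have hk : (j:ℝ) + 2 ≤ (k:ℝ) := by exact_mod_cast h
    have h2 : (M:ℝ)*x - k ≤ -1 := by
      have := (abs_lt.mp h1).2
      linarith
    have : (1:ℝ) ≤ |(M:ℝ)*x - k| := by
      rw [abs_of_nonpos (by linarith)]; linarith
    rw [hatFn_eq M k, hfun_zero this, mul_zero]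

lemma int_affine_hat (M j : ℕ) (hM : 2 ≤ M) (hj1 : 1 ≤ j) (hj2 : j ≤ M - 1) (a b : ℝ) :
    ∫ x in (0:ℝ)..1, (a + b*x) * hatFn M j x = (a + b*(j:ℝ)/M)/M := by
  have hM0 : (M:ℝ) ≠ 0 := by positivity
  have h := integral_comp_hat M j hM hj1 hj2 (fun u => (a + b*(j:ℝ)/M + (b/M)*u) * hfun u)
    ((continuous_const.add (continuous_const.mul continuous_id)).mul hfun_cont) (fun u hu => by simp only [hfun_zero hu, mul_zero])
  have e : ∀ x : ℝ, (a + b*x) * hatFn M j x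
      = (fun u => (a + b*(j:ℝ)/M + (b/M)*u) * hfun u) ((M:ℝ)*x - j) := by
    intro x
    simp only [hatFn_eq]
    congr 1
    field_simp
    ring
  rw [intervalIntegral.integral_congr (fun x _ => e x), h, int_affine_hfun]
  ring

lemma int_hat (M j : ℕ) (hM : 2 ≤ M) (hj1 : 1 ≤ j) (hj2 : j ≤ M - 1) :
    ∫ x in (0:ℝ)..1, hatFn M j x = 1/(M:ℝ) := by
  have h := int_affine_hat M j hM hj1 hj2 1 0
  rw [show (∫ x in (0:ℝ)..1, hatFn M j x) = ∫ x in (0:ℝ)..1, (1 + 0*x) * hatFn M j x by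
    apply intervalIntegral.integral_congr; intro x _; ring] 
  rw [h]; ring

lemma mass (M : ℕ) (hM : 2 ≤ M) (ξ : ℕ → ℝ) (hξ0 : ξ 0 = 0) (hξM : ∀ i, M ≤ i → ξ i = 0)
    (j : ℕ) (hj : j ∈ Finset.Icc 1 (M-1)) :
    ∫ x in (0:ℝ)..1, plf M ξ x * hatFn M j x = (ξ (j-1) + 4 * ξ j + ξ (j+1))/(6*(M:ℝ)) := by
  classical
  have hM0 : (M:ℝ) ≠ 0 := by positivity
  obtain ⟨hj1, hj2⟩ := Finset.mem_Icc.mp hj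
  have e : ∀ x : ℝ, plf M ξ x * hatFn M j x
      = ∑ k ∈ Finset.Icc 1 (M-1), ξ k * (hatFn M k x * hatFn M j x) := by
    intro x
    unfold plf
    rw [Finset.sum_mul]
    apply Finset.sum_congr rfl
    intro k _; ring
  rw [intervalIntegral.integral_congr (fun x _ => e x)]
  rw [intervalIntegral.integral_finset_sum]
  swap
  · intro k _
    exact (Continuous.intervalIntegrable (by
      exact continuous_const.mul ((hat_cont M k).mul (hat_cont M j))) _ _)
  have key : ∀ k ∈ Finset.Icc 1 (M-1),
      (∫ x in (0:ℝ)..1, ξ k * (hatFn M k x * hatFn M j x)) =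
      (if k = j-1 then ξ k * (1/(6*(M:ℝ))) else 0) + (if k = j then ξ k * (2/(3*(M:ℝ))) else 0)
        + (if k = j+1 then ξ k * (1/(6*(M:ℝ))) else 0) := by
    intro k hk
    obtain ⟨hk1, hk2⟩ := Finset.mem_Icc.mp hk
    rw [intervalIntegral.integral_const_mul]
    rcases Nat.lt_trichotomy k j with hlt | heq | hgt
    · rcases Nat.lt_or_ge (k+1) j with hlt2 | hge2
      · -- k + 2 ≤ j : far
        have hz : (∫ x in (0:ℝ)..1, hatFn M k x * hatFn M j x) = ∫ _x in (0:ℝ)..1, (0:ℝ) :=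
          intervalIntegral.integral_congr (fun x _ => int_hat_far M k j (by omega) x)
        rw [hz, intervalIntegral.integral_zero]
        rw [if_neg (by omega), if_neg (by omega), if_neg (by omega)]
        ring
      · -- k + 1 = j : adjacent
        have hkj : k + 1 = j := by omega
        rw [show (∫ x in (0:ℝ)..1, hatFn M k x * hatFn M j x) = 1/(6*(M:ℝ)) by
          rw [← hkj]; exact int_hat_adj M k hM hk1 (by omega)]
        rw [if_pos (by omega), if_neg (by omega), if_neg (by omega)]
        ring
    · rw [heq, int_hat_sq M j hM hj1 hj2]
      rw [if_neg (by omega), if_pos rfl, if_neg (by omega)]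
      ring
    · rcases Nat.lt_or_ge (j+1) k with hlt2 | hge2
      · have hz : (∫ x in (0:ℝ)..1, hatFn M k x * hatFn M j x) = ∫ _x in (0:ℝ)..1, (0:ℝ) := by
          refine intervalIntegral.integral_congr (fun x _ => ?_)
          rw [mul_comm]
          exact int_hat_far M j k (by omega) x
        rw [hz, intervalIntegral.integral_zero]
        rw [if_neg (by omega), if_neg (by omega), if_neg (by omega)]
        ring
      · have hkj : j + 1 = k := by omega
        rw [show (∫ x in (0:ℝ)..1, hatFn M k x * hatFn M j x) = 1/(6*(M:ℝ)) by
          rw [← hkj, show (∫ x in (0:ℝ)..1, hatFn M (j+1) x * hatFn M j x)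
              = ∫ x in (0:ℝ)..1, hatFn M j x * hatFn M (j+1) x from
            intervalIntegral.integral_congr (fun x _ => mul_comm _ _)]
          exact int_hat_adj M j hM hj1 (by omega)]
        rw [if_neg (by omega), if_neg (by omega), if_pos (by omega)]
        ring
  rw [Finset.sum_congr rfl key]
  rw [Finset.sum_add_distrib, Finset.sum_add_distrib,
    Finset.sum_ite_eq' (Finset.Icc 1 (M-1)) (j-1), Finset.sum_ite_eq' (Finset.Icc 1 (M-1)) j,
    Finset.sum_ite_eq' (Finset.Icc 1 (M-1)) (j+1)]
  rw [if_pos hj]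
  rcases Nat.eq_or_lt_of_le hj1 with h1 | h1
  · -- j = 1 : j - 1 = 0 ∉ I, ξ 0 = 0
    rw [if_neg (by simp [Finset.mem_Icc]; omega)]
    rcases Nat.lt_or_ge (j+1) M with h2 | h2
    · rw [if_pos (by rw [Finset.mem_Icc]; omega)]
      rw [show j - 1 = 0 by omega, hξ0]
      ring
    · rw [if_neg (by rw [Finset.mem_Icc]; omega)]
      rw [show j - 1 = 0 by omega, hξ0, hξM (j+1) (by omega)]
      ring
  · rw [if_pos (by rw [Finset.mem_Icc]; omega)]
    rcases Nat.lt_or_ge (j+1) M with h2 | h2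
    · rw [if_pos (by rw [Finset.mem_Icc]; omega)]
      ring
    · rw [if_neg (by rw [Finset.mem_Icc]; omega)]
      rw [hξM (j+1) (by omega)]
      ring

lemma discrete_bound (M : ℕ) (hM : 2 ≤ M) (e : ℕ → ℝ)
    (he : ∀ i, i ∉ Finset.Icc 1 (M-1) → e i = 0) :
    (∑ i ∈ Finset.Icc 1 (M-1), (e i)^2) ≤
      9 * ∑ i ∈ Finset.Icc 1 (M-1), ((e (i-1) + 4 * e i + e (i+1))/6)^2 := by
  classical
  set I := Finset.Icc 1 (M-1) with hI
  set S := ∑ i ∈ I, (e i)^2 with hS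
  set R := ∑ i ∈ I, ((e (i-1) + 4 * e i + e (i+1))/6)^2 with hR
  have hS0 : 0 ≤ S := Finset.sum_nonneg (fun i _ => sq_nonneg _)
  have hR0 : 0 ≤ R := Finset.sum_nonneg (fun i _ => sq_nonneg _)
  have hfull : ∑ j ∈ Finset.range (M+2), (e j)^2 = S := by
    rw [hS]
    symm
    apply Finset.sum_subset
    · intro i hi
      rw [Finset.mem_range]
      rw [hI, Finset.mem_Icc] at hi
      omega
    · intro j _ hj
      rw [he j hj]; ring
  have hsub : ∀ (φ : ℕ → ℕ), (∀ i ∈ I, ∀ k ∈ I, φ i = φ k → i = k) → (∀ i ∈ I, φ i < M + 2) →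
      ∑ i ∈ I, (e (φ i))^2 ≤ S := by
    intro φ hinj hbd
    rw [← hfull]
    have himg : ∑ i ∈ I, (e (φ i))^2 = ∑ j ∈ I.image φ, (e j)^2 :=
      (Finset.sum_image (f := fun j => e j ^ 2) (g := φ) (s := I) (fun i hi k hk h => hinj i hi k hk h)).symm
    rw [himg]
    apply Finset.sum_le_sum_of_subset_of_nonneg
    · intro j hj
      rw [Finset.mem_image] at hj
      obtain ⟨i, hi, rfl⟩ := hj
      rw [Finset.mem_range]
      exact hbd i hi
    · intro j _ _
      exact sq_nonneg _
  have hm1 : ∑ i ∈ I, (e (i-1))^2 ≤ S := by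
    apply hsub
    · intro i hi k hk h
      rw [hI, Finset.mem_Icc] at hi hk
      omega
    · intro i hi
      rw [hI, Finset.mem_Icc] at hi
      omega
  have hp1 : ∑ i ∈ I, (e (i+1))^2 ≤ S := by
    apply hsub
    · intro i _ k _ h
      omega
    · intro i hi
      rw [hI, Finset.mem_Icc] at hi
      omega
  -- coercivity : S/3 ≤ ∑ e i * r i
  have hpt : ∀ i ∈ I, (e i)^2 * (1/2) - (e (i-1))^2 * (1/12) - (e (i+1))^2 * (1/12)
      ≤ e i * ((e (i-1) + 4 * e i + e (i+1))/6) := by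
    intro i _
    nlinarith [sq_nonneg (e i + e (i-1)), sq_nonneg (e i + e (i+1))]
  have hcoer : S * (1/2) - S * (1/12) - S * (1/12) ≤ ∑ i ∈ I, e i * ((e (i-1) + 4 * e i + e (i+1))/6) := by
    have h1 := Finset.sum_le_sum hpt
    rw [Finset.sum_sub_distrib, Finset.sum_sub_distrib, ← Finset.sum_mul, ← Finset.sum_mul,
      ← Finset.sum_mul] at h1
    have h2 : (∑ i ∈ I, (e (i-1))^2) * (1/12) ≤ S * (1/12) := by
      apply mul_le_mul_of_nonneg_right hm1; norm_num
    have h3 : (∑ i ∈ I, (e (i+1))^2) * (1/12) ≤ S * (1/12) := by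
      apply mul_le_mul_of_nonneg_right hp1; norm_num
    calc S * (1/2) - S * (1/12) - S * (1/12)
        ≤ S * (1/2) - (∑ i ∈ I, (e (i-1))^2) * (1/12) - (∑ i ∈ I, (e (i+1))^2) * (1/12) := by
          linarith
      _ ≤ _ := h1
  have hT : S / 3 ≤ ∑ i ∈ I, e i * ((e (i-1) + 4 * e i + e (i+1))/6) := by
    calc S / 3 = S * (1/2) - S * (1/12) - S * (1/12) := by ring
      _ ≤ _ := hcoer
  have hcs := Finset.sum_mul_sq_le_sq_mul_sq I e (fun i => (e (i-1) + 4 * e i + e (i+1))/6)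
  -- S/3 ≤ T, T^2 ≤ S * R  ⟹  S ≤ 9 R
  set T := ∑ i ∈ I, e i * ((e (i-1) + 4 * e i + e (i+1))/6) with hTdef
  have hT0 : 0 ≤ T := le_trans (by linarith) hT
  rcases eq_or_lt_of_le hS0 with h0 | h0
  · linarith
  · nlinarith [hcs, hT, h0, hR0]

lemma taylor_bound (ψ ψ' ψ'' : ℝ → ℝ)
    (hψ'c : ContinuousOn ψ' (Set.Icc 0 1))
    (hψ'' : IntegrableOn ψ'' (Set.Icc 0 1))
    (hftc1 : ∀ a ∈ Set.Icc (0:ℝ) 1, ∀ b ∈ Set.Icc (0:ℝ) 1, ψ b - ψ a = ∫ x in a..b, ψ' x)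
    (hftc2 : ∀ a ∈ Set.Icc (0:ℝ) 1, ∀ b ∈ Set.Icc (0:ℝ) 1, ψ' b - ψ' a = ∫ x in a..b, ψ'' x)
    (A : Set ℝ) (hAsub : A ⊆ Set.Icc 0 1) (hAconn : A.OrdConnected)
    {c x : ℝ} (hc : c ∈ A) (hx : x ∈ A) :
    |ψ x - ψ c - ψ' c * (x - c)| ≤ |x - c| * ∫ s in A, |ψ'' s| := by
  have hcI := hAsub hc
  have hxI := hAsub hx
  have huIcc : Set.uIcc c x ⊆ Set.Icc (0:ℝ) 1 := Set.ordConnected_Icc.uIcc_subset hcI hxI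
  have habs : IntegrableOn (fun s => |ψ'' s|) A volume := (hψ''.mono_set hAsub).abs
  have key : ψ x - ψ c - ψ' c * (x - c) = ∫ t in c..x, (ψ' t - ψ' c) := by
    rw [intervalIntegral.integral_sub ((hψ'c.mono huIcc).intervalIntegrable)
      (intervalIntegrable_const), intervalIntegral.integral_const, smul_eq_mul,
      ← hftc1 c hcI x hxI]
    ring
  rw [key]
  have bound : ∀ t ∈ Set.uIoc c x, ‖ψ' t - ψ' c‖ ≤ ∫ s in A, |ψ'' s| := by
    intro t ht
    have htu : t ∈ Set.uIcc c x := Set.uIoc_subset_uIcc ht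
    have htA : t ∈ A := hAconn.uIcc_subset hc hx htu
    have htI := hAsub htA
    rw [Real.norm_eq_abs, hftc2 c hcI t htI]
    rcases le_total c t with h | h
    · rw [intervalIntegral.integral_of_le h]
      calc |∫ s in Set.Ioc c t, ψ'' s| ≤ ∫ s in Set.Ioc c t, |ψ'' s| := by
            simpa [Real.norm_eq_abs] using
              MeasureTheory.norm_integral_le_integral_norm (μ := volume.restrict (Set.Ioc c t)) ψ''
        _ ≤ ∫ s in A, |ψ'' s| := by
            apply setIntegral_mono_set habs
            · exact Filter.Eventually.of_forall (fun s => abs_nonneg _)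
            · exact HasSubset.Subset.eventuallyLE
                (le_trans Set.Ioc_subset_Icc_self (hAconn.out hc htA))
    · rw [intervalIntegral.integral_of_ge h, abs_neg]
      calc |∫ s in Set.Ioc t c, ψ'' s| ≤ ∫ s in Set.Ioc t c, |ψ'' s| := by
            simpa [Real.norm_eq_abs] using
              MeasureTheory.norm_integral_le_integral_norm (μ := volume.restrict (Set.Ioc t c)) ψ''
        _ ≤ ∫ s in A, |ψ'' s| := by
            apply setIntegral_mono_set habs
            · exact Filter.Eventually.of_forall (fun s => abs_nonneg _)
            · exact HasSubset.Subset.eventuallyLE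
                (le_trans Set.Ioc_subset_Icc_self (hAconn.out htA hc))
  have h := intervalIntegral.norm_integral_le_of_norm_le_const bound
  rw [Real.norm_eq_abs] at h
  calc |∫ t in c..x, (ψ' t - ψ' c)| ≤ (∫ s in A, |ψ'' s|) * |x - c| := h
    _ = |x - c| * ∫ s in A, |ψ'' s| := mul_comm _ _

lemma l1_le_l2 (f : ℝ → ℝ) (A : Set ℝ) (hA : MeasurableSet A) (hAsub : A ⊆ Set.Icc 0 1)
    (hf : IntegrableOn f (Set.Icc 0 1)) (hf2 : IntegrableOn (fun x => (f x)^2) (Set.Icc 0 1)) :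
    (∫ x in A, |f x|)^2 ≤ (volume A).toReal * ∫ x in A, (f x)^2 := by
  set S := ∫ x in A, |f x| with hSdef
  set T := ∫ x in A, (f x)^2 with hTdef
  set V := (volume A).toReal with hVdef
  have hfA : IntegrableOn f A := hf.mono_set hAsub
  have hf2A : IntegrableOn (fun x => (f x)^2) A := hf2.mono_set hAsub
  have hS0 : 0 ≤ S := integral_nonneg (fun x => abs_nonneg _)
  have hT0 : 0 ≤ T := integral_nonneg (fun x => sq_nonneg _)
  have hV0 : 0 ≤ V := ENNReal.toReal_nonneg
  have hfin : volume A ≠ ⊤ := by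
    apply ne_of_lt
    calc volume A ≤ volume (Set.Icc (0:ℝ) 1) := measure_mono hAsub
      _ < ⊤ := by rw [Real.volume_Icc]; exact ENNReal.ofReal_lt_top
  rcases eq_or_lt_of_le hS0 with h0 | h0
  · rw [← h0]
    simpa using mul_nonneg hV0 hT0
  · have hVpos : 0 < V := by
      rcases eq_or_lt_of_le hV0 with hv | hv
      · exfalso
        have hA0 : volume A = 0 := by
          rw [hVdef] at hv
          exact (ENNReal.toReal_eq_zero_iff _).mp hv.symm |>.resolve_right hfin
        have : S = 0 := by
          rw [hSdef, MeasureTheory.Measure.restrict_eq_zero.mpr hA0, integral_zero_measure]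
        linarith
      · exact hv
    obtain ⟨lam, hlamdef⟩ : ∃ l : ℝ, l = S / V := ⟨_, rfl⟩
    have hlam : 0 < lam := hlamdef ▸ div_pos h0 hVpos
    have hconst : IntegrableOn (fun _ : ℝ => lam) A volume :=
      integrableOn_const hfin
    have hpt : ∀ y : ℝ, |f y| ≤ (lam + (f y)^2/lam)/2 := by
      intro y
      have h1 : 2 * lam * |f y| ≤ lam^2 + (f y)^2 := by
        nlinarith [sq_nonneg (|f y| - lam), sq_abs (f y)]
      have h2 : (lam + (f y)^2/lam)/2 = (lam^2 + (f y)^2)/(2*lam) := by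
        field_simp
      rw [h2, le_div_iff₀ (by positivity)]
      linarith
    have hint : S ≤ (lam * V + T/lam)/2 := by
      have h1 : S ≤ ∫ y in A, ((lam + (f y)^2/lam)/2) := by
        refine MeasureTheory.integral_mono hfA.abs ?_ hpt
        exact (hconst.add (hf2A.div_const lam)).div_const 2
      have h2 : (∫ y in A, ((lam + (f y)^2/lam)/2)) = (lam * V + T/lam)/2 := by
        rw [MeasureTheory.integral_div]
        congr 1
        rw [MeasureTheory.integral_add hconst (hf2A.div_const lam),
          setIntegral_const, smul_eq_mul, MeasureTheory.integral_div]
        simp only [measureReal_def, ← hVdef, ← hTdef]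
        ring
      linarith [h2 ▸ h1]
    have hlamV : lam * V = S := by
      rw [hlamdef]
      exact div_mul_cancel₀ _ (ne_of_gt hVpos)
    have hTlam : T / lam = T * V / S := by
      rw [hlamdef, div_div_eq_mul_div]
    rw [hlamV, hTlam] at hint
    have hfin2 : S ≤ T * V / S := by linarith
    rw [le_div_iff₀ h0] at hfin2
    calc S^2 = S * S := sq S
      _ ≤ T * V := hfin2
      _ = V * T := mul_comm _ _

lemma overlap_bound (M : ℕ) (hM : 2 ≤ M) (f : ℝ → ℝ) (hf : IntegrableOn f (Set.Icc 0 1))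
    (hf0 : ∀ x, 0 ≤ f x) :
    ∑ i ∈ Finset.Icc 1 (M-1),
        ∫ x in (Set.Icc (0:ℝ) 1 ∩ Set.Icc (((i:ℝ)-2)/M) (((i:ℝ)+2)/M)), f x
      ≤ 5 * ∫ x in Set.Icc (0:ℝ) 1, f x := by
  classical
  have hMpos : (0:ℝ) < M := by positivity
  have hrw : ∀ i ∈ Finset.Icc 1 (M-1),
      (∫ x in (Set.Icc (0:ℝ) 1 ∩ Set.Icc (((i:ℝ)-2)/M) (((i:ℝ)+2)/M)), f x)
      = ∫ x in Set.Icc (0:ℝ) 1, (Set.Icc (((i:ℝ)-2)/M) (((i:ℝ)+2)/M)).indicator f x :=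
    fun i _ => (setIntegral_indicator measurableSet_Icc).symm
  rw [Finset.sum_congr rfl hrw]
  rw [← MeasureTheory.integral_finset_sum _
    (fun i _ => (hf.indicator measurableSet_Icc : _))]
  have hmono : ∀ x ∈ Set.Icc (0:ℝ) 1,
      (∑ i ∈ Finset.Icc 1 (M-1), (Set.Icc (((i:ℝ)-2)/M) (((i:ℝ)+2)/M)).indicator f x)
      ≤ 5 * f x := by
    intro x hx
    have hx0 : 0 ≤ x := hx.1
    set n := ⌊(M:ℝ)*x⌋₊ with hn
    set P : ℕ → Prop := fun i => x ∈ Set.Icc (((i:ℝ)-2)/M) (((i:ℝ)+2)/M) with hP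
    have hsum : (∑ i ∈ Finset.Icc 1 (M-1), (Set.Icc (((i:ℝ)-2)/M) (((i:ℝ)+2)/M)).indicator f x)
        = ∑ i ∈ (Finset.Icc 1 (M-1)).filter P, f x := by
      rw [Finset.sum_filter]
      apply Finset.sum_congr rfl
      intro i _
      rw [Set.indicator_apply]
    rw [hsum, Finset.sum_const]
    have hcard : ((Finset.Icc 1 (M-1)).filter P).card ≤ 5 := by
      have hsubset : (Finset.Icc 1 (M-1)).filter P ⊆ Finset.Icc (n-2) (n+2) := by
        intro i hi
        obtain ⟨hiI, hxi⟩ := Finset.mem_filter.mp hi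
        obtain ⟨hlo, hhi⟩ := hxi
        have h1 : (i:ℝ) - 2 ≤ (M:ℝ)*x := by
          rw [div_le_iff₀ hMpos] at hlo
          linarith [hlo]
        have h2 : (M:ℝ)*x ≤ (i:ℝ) + 2 := by
          rw [le_div_iff₀ hMpos] at hhi
          linarith [hhi]
        have hfl : (n:ℝ) ≤ (M:ℝ)*x := Nat.floor_le (by positivity)
        have hfu : (M:ℝ)*x < (n:ℝ) + 1 := Nat.lt_floor_add_one _
        have hr1 : (i:ℝ) < (n:ℝ) + 3 := by linarith
        have hr2 : (n:ℝ) ≤ (i:ℝ) + 2 := by linarith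
        have h3 : i < n + 3 := by exact_mod_cast hr1
        have h4 : n ≤ i + 2 := by exact_mod_cast hr2
        exact Finset.mem_Icc.mpr ⟨by omega, by omega⟩
      calc _ ≤ (Finset.Icc (n-2) (n+2)).card := Finset.card_le_card hsubset
        _ ≤ 5 := by rw [Nat.card_Icc]; omega
    calc ((Finset.Icc 1 (M-1)).filter P).card • f x
        = (((Finset.Icc 1 (M-1)).filter P).card : ℝ) * f x := by rw [nsmul_eq_mul]
      _ ≤ 5 * f x := by
          apply mul_le_mul_of_nonneg_right _ (hf0 x)
          exact_mod_cast hcard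
  have hRHS : (5:ℝ) * ∫ x in Set.Icc (0:ℝ) 1, f x = ∫ x in Set.Icc (0:ℝ) 1, 5 * f x := by
    rw [MeasureTheory.integral_const_mul]
  rw [hRHS]
  apply MeasureTheory.setIntegral_mono_on
  · exact integrable_finset_sum _ (fun i _ => (hf.indicator measurableSet_Icc : _))
  · exact hf.const_mul 5
  · exact measurableSet_Icc
  · exact hmono

lemma stepC_core (M : ℕ) (hM : 2 ≤ M) (ψ ψ' ψ'' : ℝ → ℝ)
    (hψc : ContinuousOn ψ (Set.Icc 0 1))
    (hψ'c : ContinuousOn ψ' (Set.Icc 0 1))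
    (hψ'' : IntegrableOn ψ'' (Set.Icc 0 1))
    (hftc1 : ∀ a ∈ Set.Icc (0:ℝ) 1, ∀ b ∈ Set.Icc (0:ℝ) 1, ψ b - ψ a = ∫ x in a..b, ψ' x)
    (hftc2 : ∀ a ∈ Set.Icc (0:ℝ) 1, ∀ b ∈ Set.Icc (0:ℝ) 1, ψ' b - ψ' a = ∫ x in a..b, ψ'' x)
    (i : ℕ) (G : ℝ → ℝ) (hGcont : Continuous G)
    (hGsupp : ∀ x, G x ≠ 0 → ((i:ℝ)-2)/M ≤ x ∧ x ≤ ((i:ℝ)+2)/M ∧ 0 ≤ x ∧ x ≤ 1)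
    (hGbd : ∫ x in (0:ℝ)..1, |G x| ≤ 4/(M:ℝ))
    (c : ℝ) (hcA : c ∈ Set.Icc (0:ℝ) 1 ∩ Set.Icc (((i:ℝ)-2)/M) (((i:ℝ)+2)/M))
    (hmom : ∫ x in (0:ℝ)..1, (ψ c + ψ' c * (x - c)) * G x = 0) :
    |∫ x in (0:ℝ)..1, ψ x * G x|
      ≤ 16/(M:ℝ)^2 * ∫ s in (Set.Icc (0:ℝ) 1 ∩ Set.Icc (((i:ℝ)-2)/M) (((i:ℝ)+2)/M)), |ψ'' s| := by
  have hMpos : (0:ℝ) < M := by positivity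
  set A : Set ℝ := Set.Icc (0:ℝ) 1 ∩ Set.Icc (((i:ℝ)-2)/M) (((i:ℝ)+2)/M) with hA
  set L : ℝ := ∫ s in A, |ψ'' s| with hL
  have hL0 : 0 ≤ L := integral_nonneg (fun s => abs_nonneg _)
  have hAsub : A ⊆ Set.Icc (0:ℝ) 1 := Set.inter_subset_left
  have hAconn : A.OrdConnected := Set.ordConnected_Icc.inter Set.ordConnected_Icc
  have huIcc : Set.uIcc (0:ℝ) 1 = Set.Icc 0 1 := Set.uIcc_of_le zero_le_one
  set ℓ : ℝ → ℝ := fun x => ψ c + ψ' c * (x - c) with hℓ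
  have hℓcont : Continuous ℓ := by
    rw [hℓ]; fun_prop
  have hint1 : IntervalIntegrable (fun x => (ψ x - ℓ x) * G x) volume 0 1 := by
    apply ContinuousOn.intervalIntegrable
    rw [huIcc]
    exact ((hψc.sub hℓcont.continuousOn).mul hGcont.continuousOn)
  have hint2 : IntervalIntegrable (fun x => ℓ x * G x) volume 0 1 :=
    (hℓcont.mul hGcont).intervalIntegrable _ _
  have hsplit : ∫ x in (0:ℝ)..1, ψ x * G x
      = (∫ x in (0:ℝ)..1, (ψ x - ℓ x) * G x) + ∫ x in (0:ℝ)..1, ℓ x * G x := by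
    rw [← intervalIntegral.integral_add hint1 hint2]
    apply intervalIntegral.integral_congr
    intro x _
    ring
  rw [hsplit, hmom, add_zero]
  have habs : |∫ x in (0:ℝ)..1, (ψ x - ℓ x) * G x| ≤ ∫ x in (0:ℝ)..1, |ψ x - ℓ x| * |G x| := by
    simpa [Real.norm_eq_abs] using
      intervalIntegral.norm_integral_le_integral_norm (f := fun x => (ψ x - ℓ x) * G x)
        (μ := volume) zero_le_one
  have hpt : ∀ x ∈ Set.Icc (0:ℝ) 1, |ψ x - ℓ x| * |G x| ≤ (4/(M:ℝ) * L) * |G x| := by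
    intro x _
    by_cases hGx : G x = 0
    · rw [hGx, abs_zero, mul_zero, mul_zero]
    · obtain ⟨hb1, hb2, hb3, hb4⟩ := hGsupp x hGx
      have hxA : x ∈ A := ⟨⟨hb3, hb4⟩, hb1, hb2⟩
      have htay := taylor_bound ψ ψ' ψ'' hψ'c hψ'' hftc1 hftc2 A hAsub hAconn hcA hxA
      have hid : ((i:ℝ)+2)/M - ((i:ℝ)-2)/M = 4/M := by
        rw [div_sub_div_same]; norm_num
      have hxc : |x - c| ≤ 4/(M:ℝ) := by
        rw [abs_le]
        obtain ⟨_, hc1, hc2⟩ := hcA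
        constructor
        · linarith
        · linarith
      have harg : ψ x - ℓ x = ψ x - ψ c - ψ' c*(x-c) := by
        simp only [hℓ]; ring
      have hψℓ : |ψ x - ℓ x| ≤ 4/(M:ℝ) * L := by
        rw [harg]
        calc |ψ x - ψ c - ψ' c*(x-c)| ≤ |x - c| * L := htay
          _ ≤ 4/(M:ℝ) * L := mul_le_mul_of_nonneg_right hxc hL0
      exact mul_le_mul_of_nonneg_right hψℓ (abs_nonneg _)
  have hmono : (∫ x in (0:ℝ)..1, |ψ x - ℓ x| * |G x|)
      ≤ ∫ x in (0:ℝ)..1, (4/(M:ℝ)*L)*|G x| := by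
    apply intervalIntegral.integral_mono_on zero_le_one _ _ hpt
    · apply ContinuousOn.intervalIntegrable
      rw [huIcc]
      exact ((hψc.sub hℓcont.continuousOn).abs.mul hGcont.abs.continuousOn)
    · exact (continuous_const.mul hGcont.abs).intervalIntegrable _ _
  have hCM : (0:ℝ) ≤ 4/(M:ℝ)*L := by positivity
  calc |∫ x in (0:ℝ)..1, (ψ x - ℓ x) * G x| ≤ ∫ x in (0:ℝ)..1, |ψ x - ℓ x| * |G x| := habs
    _ ≤ ∫ x in (0:ℝ)..1, (4/(M:ℝ)*L)*|G x| := hmono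
    _ = (4/(M:ℝ)*L) * ∫ x in (0:ℝ)..1, |G x| := intervalIntegral.integral_const_mul _ _
    _ ≤ (4/(M:ℝ)*L) * (4/(M:ℝ)) := mul_le_mul_of_nonneg_left hGbd hCM
    _ = 16/(M:ℝ)^2 * L := by ring

lemma stepB (M : ℕ) (hM : 2 ≤ M) (ξ : ℕ → ℝ) (hξ0 : ξ 0 = 0) (hξM : ∀ i, M ≤ i → ξ i = 0)
    (q' e : ℕ → ℝ)
    (hq' : ∀ j, q' j = if j ∈ Finset.Icc 1 (M-1) then (ξ (j-1) + 4*ξ j + ξ (j+1))/(6*(M:ℝ)) else 0)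
    (he : ∀ j, e j = if j ∈ Finset.Icc 1 (M-1) then (M:ℝ)^2 * (ξ (j+1) - 2*ξ j + ξ (j-1)) else 0)
    (i : ℕ) (hi : i ∈ Finset.Icc 1 (M-1)) :
    (e (i-1) + 4 * e i + e (i+1))/6 = (M:ℝ)^3 * (q' (i+1) - 2*q' i + q' (i-1)) := by
  obtain ⟨hi1, hi2⟩ := Finset.mem_Icc.mp hi
  have hM0 : (M:ℝ) ≠ 0 := by
    have : 0 < M := by omega
    positivity
  have hein : ∀ j, 1 ≤ j → j ≤ M - 1 → e j = (M:ℝ)^2 * (ξ (j+1) - 2*ξ j + ξ (j-1)) := by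
    intro j hj1 hj2
    rw [he j, if_pos (Finset.mem_Icc.mpr ⟨hj1, hj2⟩)]
  have heout : ∀ j, (j < 1 ∨ M - 1 < j) → e j = 0 := by
    intro j hj
    rw [he j, if_neg (by rw [Finset.mem_Icc]; omega)]
  have hqin : ∀ j, 1 ≤ j → j ≤ M - 1 → q' j = (ξ (j-1) + 4*ξ j + ξ (j+1))/(6*(M:ℝ)) := by
    intro j hj1 hj2
    rw [hq' j, if_pos (Finset.mem_Icc.mpr ⟨hj1, hj2⟩)]
  have hqout : ∀ j, (j < 1 ∨ M - 1 < j) → q' j = 0 := by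
    intro j hj
    rw [hq' j, if_neg (by rw [Finset.mem_Icc]; omega)]
  by_cases h1 : i = 1 <;> by_cases h2 : i = M - 1
  · -- i = 1 = M - 1, so M = 2
    have hM2 : M = 2 := by omega
    subst h1
    rw [show (1:ℕ) - 1 = 0 from rfl]
    rw [heout 0 (by omega), heout 2 (by omega), hqout 0 (by omega), hqout 2 (by omega),
      hein 1 (by omega) (by omega), hqin 1 (by omega) (by omega)]
    rw [show (1:ℕ) - 1 = 0 from rfl, hξ0, hξM 2 (by omega)]
    field_simp
    ring
  · -- i = 1, M ≥ 3
    have hM3 : 3 ≤ M := by omega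
    subst h1
    rw [show (1:ℕ) - 1 = 0 from rfl]
    rw [heout 0 (by omega), hein 1 (by omega) (by omega), hein 2 (by omega) (by omega),
      hqout 0 (by omega), hqin 1 (by omega) (by omega), hqin 2 (by omega) (by omega)]
    rw [show (1:ℕ) - 1 = 0 from rfl, show (2:ℕ) - 1 = 1 from rfl, hξ0]
    field_simp
    ring
  · -- i = M - 1, M ≥ 3
    have hM3 : 3 ≤ M := by omega
    rw [heout (i+1) (by omega), hein i (by omega) (by omega), hein (i-1) (by omega) (by omega),
      hqout (i+1) (by omega), hqin i (by omega) (by omega), hqin (i-1) (by omega) (by omega)]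
    rw [show i - 1 + 1 = i by omega, show i - 1 - 1 = i - 2 by omega]
    rw [hξM (i+1) (by omega)]
    field_simp
    ring
  · -- 2 ≤ i ≤ M - 2
    rw [hein (i-1) (by omega) (by omega), hein i (by omega) (by omega),
      hein (i+1) (by omega) (by omega),
      hqin (i+1) (by omega) (by omega), hqin i (by omega) (by omega),
      hqin (i-1) (by omega) (by omega)]
    rw [show i - 1 + 1 = i by omega, show i - 1 - 1 = i - 2 by omega,
      show i + 1 - 1 = i by omega]
    field_simp
    ring

lemma int_mul_comb (ψ : ℝ → ℝ) (hψc : ContinuousOn ψ (Set.Icc 0 1))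
    (M j₀ j₁ j₂ : ℕ) (c₀ c₁ c₂ : ℝ) :
    ∫ x in (0:ℝ)..1, ψ x * (c₀*hatFn M j₀ x + c₁*hatFn M j₁ x + c₂*hatFn M j₂ x)
      = c₀*(∫ x in (0:ℝ)..1, ψ x * hatFn M j₀ x) + c₁*(∫ x in (0:ℝ)..1, ψ x * hatFn M j₁ x)
        + c₂*(∫ x in (0:ℝ)..1, ψ x * hatFn M j₂ x) := by
  have huIcc : Set.uIcc (0:ℝ) 1 = Set.Icc 0 1 := Set.uIcc_of_le zero_le_one
  have hint : ∀ j : ℕ, IntervalIntegrable (fun x => ψ x * hatFn M j x) volume 0 1 := by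
    intro j
    apply ContinuousOn.intervalIntegrable
    rw [huIcc]
    exact hψc.mul (hat_cont M j).continuousOn
  have hpt : ∀ x : ℝ, ψ x * (c₀*hatFn M j₀ x + c₁*hatFn M j₁ x + c₂*hatFn M j₂ x)
      = c₀*(ψ x * hatFn M j₀ x) + c₁*(ψ x * hatFn M j₁ x) + c₂*(ψ x * hatFn M j₂ x) := by
    intro x; ring
  rw [intervalIntegral.integral_congr (fun x _ => hpt x)]
  rw [intervalIntegral.integral_add (((hint j₀).const_mul c₀).add ((hint j₁).const_mul c₁))
    ((hint j₂).const_mul c₂),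
    intervalIntegral.integral_add ((hint j₀).const_mul c₀) ((hint j₁).const_mul c₁),
    intervalIntegral.integral_const_mul, intervalIntegral.integral_const_mul,
    intervalIntegral.integral_const_mul]

lemma stepC_comb (M : ℕ) (hM : 2 ≤ M) (ψ ψ' ψ'' : ℝ → ℝ)
    (hψc : ContinuousOn ψ (Set.Icc 0 1))
    (hψ'c : ContinuousOn ψ' (Set.Icc 0 1))
    (hψ'' : IntegrableOn ψ'' (Set.Icc 0 1))
    (hftc1 : ∀ a ∈ Set.Icc (0:ℝ) 1, ∀ b ∈ Set.Icc (0:ℝ) 1, ψ b - ψ a = ∫ x in a..b, ψ' x)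
    (hftc2 : ∀ a ∈ Set.Icc (0:ℝ) 1, ∀ b ∈ Set.Icc (0:ℝ) 1, ψ' b - ψ' a = ∫ x in a..b, ψ'' x)
    (i j₀ j₁ j₂ : ℕ) (c₀ c₁ c₂ : ℝ)
    (hj₀ : j₀ ∈ Finset.Icc 1 (M-1)) (hj₁ : j₁ ∈ Finset.Icc 1 (M-1))
    (hj₂ : j₂ ∈ Finset.Icc 1 (M-1))
    (hd₀ : (i:ℝ) - 1 ≤ j₀ ∧ (j₀:ℝ) ≤ i + 1) (hd₁ : (i:ℝ) - 1 ≤ j₁ ∧ (j₁:ℝ) ≤ i + 1)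
    (hd₂ : (i:ℝ) - 1 ≤ j₂ ∧ (j₂:ℝ) ≤ i + 1)
    (hc : |c₀| + |c₁| + |c₂| ≤ 4)
    (c : ℝ) (hcA : c ∈ Set.Icc (0:ℝ) 1 ∩ Set.Icc (((i:ℝ)-2)/M) (((i:ℝ)+2)/M))
    (hmom : c₀*((ψ c - ψ' c * c) + ψ' c*(j₀:ℝ)/M) + c₁*((ψ c - ψ' c * c) + ψ' c*(j₁:ℝ)/M)
      + c₂*((ψ c - ψ' c * c) + ψ' c*(j₂:ℝ)/M) = 0) :
    |∫ x in (0:ℝ)..1, ψ x * (c₀*hatFn M j₀ x + c₁*hatFn M j₁ x + c₂*hatFn M j₂ x)|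
      ≤ 16/(M:ℝ)^2 * ∫ s in (Set.Icc (0:ℝ) 1 ∩ Set.Icc (((i:ℝ)-2)/M) (((i:ℝ)+2)/M)), |ψ'' s| := by
  have hMpos : (0:ℝ) < M := by
    have : 0 < M := by omega
    exact_mod_cast this
  have hM0 : (M:ℝ) ≠ 0 := ne_of_gt hMpos
  have huIcc : Set.uIcc (0:ℝ) 1 = Set.Icc 0 1 := Set.uIcc_of_le zero_le_one
  set G : ℝ → ℝ := fun x => c₀*hatFn M j₀ x + c₁*hatFn M j₁ x + c₂*hatFn M j₂ x with hG
  have hGcont : Continuous G := by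
    rw [hG]
    exact ((continuous_const.mul (hat_cont M j₀)).add
      (continuous_const.mul (hat_cont M j₁))).add (continuous_const.mul (hat_cont M j₂))
  -- support
  have hsupp1 : ∀ (j : ℕ), j ∈ Finset.Icc 1 (M-1) → (i:ℝ) - 1 ≤ j → (j:ℝ) ≤ i + 1 →
      ∀ x : ℝ, hatFn M j x ≠ 0 →
      ((i:ℝ)-2)/M ≤ x ∧ x ≤ ((i:ℝ)+2)/M ∧ 0 ≤ x ∧ x ≤ 1 := by
    intro j hj hdl hdu x hx
    obtain ⟨hj1, hj2⟩ := Finset.mem_Icc.mp hj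
    have h1 : |(M:ℝ)*x - j| < 1 := abs_lt_of_hat_ne hx
    obtain ⟨h2, h3⟩ := abs_lt.mp h1
    have hj1' : (1:ℝ) ≤ j := by exact_mod_cast hj1
    have hj2' : (j:ℝ) ≤ (M:ℝ) - 1 := by
      have : j + 1 ≤ M := by omega
      have : (j:ℝ) + 1 ≤ M := by exact_mod_cast this
      linarith
    refine ⟨?_, ?_, ?_, ?_⟩
    · rw [div_le_iff₀ hMpos]
      nlinarith
    · rw [le_div_iff₀ hMpos]
      nlinarith
    · nlinarith
    · nlinarith
  have hGsupp : ∀ x, G x ≠ 0 → ((i:ℝ)-2)/M ≤ x ∧ x ≤ ((i:ℝ)+2)/M ∧ 0 ≤ x ∧ x ≤ 1 := by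
    intro x hx
    by_cases h0 : hatFn M j₀ x ≠ 0
    · exact hsupp1 j₀ hj₀ hd₀.1 hd₀.2 x h0
    by_cases h1 : hatFn M j₁ x ≠ 0
    · exact hsupp1 j₁ hj₁ hd₁.1 hd₁.2 x h1
    by_cases h2 : hatFn M j₂ x ≠ 0
    · exact hsupp1 j₂ hj₂ hd₂.1 hd₂.2 x h2
    exfalso
    push_neg at h0 h1 h2
    apply hx
    rw [hG]
    simp only [h0, h1, h2, mul_zero, add_zero, zero_add]
  -- integral bound on |G|
  have hGbd : ∫ x in (0:ℝ)..1, |G x| ≤ 4/(M:ℝ) := by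
    have hpt : ∀ x ∈ Set.Icc (0:ℝ) 1, |G x|
        ≤ |c₀| * hatFn M j₀ x + |c₁| * hatFn M j₁ x + |c₂| * hatFn M j₂ x := by
      intro x _
      rw [hG]
      calc |c₀*hatFn M j₀ x + c₁*hatFn M j₁ x + c₂*hatFn M j₂ x|
          ≤ |c₀*hatFn M j₀ x + c₁*hatFn M j₁ x| + |c₂*hatFn M j₂ x| := abs_add_le _ _
        _ ≤ |c₀*hatFn M j₀ x| + |c₁*hatFn M j₁ x| + |c₂*hatFn M j₂ x| := by
            linarith [abs_add_le (c₀*hatFn M j₀ x) (c₁*hatFn M j₁ x)]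
        _ = |c₀| * hatFn M j₀ x + |c₁| * hatFn M j₁ x + |c₂| * hatFn M j₂ x := by
            rw [abs_mul, abs_mul, abs_mul, abs_of_nonneg (hat_nonneg M j₀ x),
              abs_of_nonneg (hat_nonneg M j₁ x), abs_of_nonneg (hat_nonneg M j₂ x)]
    have hint : ∀ (j : ℕ) (cc : ℝ), IntervalIntegrable (fun x => cc * hatFn M j x) volume 0 1 :=
      fun j cc => (continuous_const.mul (hat_cont M j)).intervalIntegrable _ _
    have hmono := intervalIntegral.integral_mono_on zero_le_one
      (hGcont.abs.intervalIntegrable _ _)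
      (((hint j₀ |c₀|).add (hint j₁ |c₁|)).add (hint j₂ |c₂|)) hpt
    have hval : ∫ x in (0:ℝ)..1,
        (|c₀| * hatFn M j₀ x + |c₁| * hatFn M j₁ x + |c₂| * hatFn M j₂ x)
        = (|c₀| + |c₁| + |c₂|) * (1/(M:ℝ)) := by
      rw [intervalIntegral.integral_add ((hint j₀ |c₀|).add (hint j₁ |c₁|)) (hint j₂ |c₂|),
        intervalIntegral.integral_add (hint j₀ |c₀|) (hint j₁ |c₁|),
        intervalIntegral.integral_const_mul, intervalIntegral.integral_const_mul,
        intervalIntegral.integral_const_mul,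
        int_hat M j₀ hM (Finset.mem_Icc.mp hj₀).1 (Finset.mem_Icc.mp hj₀).2,
        int_hat M j₁ hM (Finset.mem_Icc.mp hj₁).1 (Finset.mem_Icc.mp hj₁).2,
        int_hat M j₂ hM (Finset.mem_Icc.mp hj₂).1 (Finset.mem_Icc.mp hj₂).2]
      ring
    rw [hval] at hmono
    calc ∫ x in (0:ℝ)..1, |G x| ≤ (|c₀| + |c₁| + |c₂|) * (1/(M:ℝ)) := hmono
      _ ≤ 4 * (1/(M:ℝ)) := by
          apply mul_le_mul_of_nonneg_right hc
          positivity
      _ = 4/(M:ℝ) := by ring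
  -- moment
  have hmomI : ∫ x in (0:ℝ)..1, (ψ c + ψ' c * (x - c)) * G x = 0 := by
    have hpt : ∀ x : ℝ, (ψ c + ψ' c * (x - c)) * G x
        = ((ψ c - ψ' c * c) + ψ' c * x) * (c₀*hatFn M j₀ x + c₁*hatFn M j₁ x + c₂*hatFn M j₂ x) := by
      intro x
      rw [hG]
      ring
    rw [intervalIntegral.integral_congr (fun x _ => hpt x)]
    have hcont : ContinuousOn (fun x => (ψ c - ψ' c * c) + ψ' c * x) (Set.Icc (0:ℝ) 1) := by
      fun_prop
    rw [int_mul_comb _ hcont,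
      int_affine_hat M j₀ hM (Finset.mem_Icc.mp hj₀).1 (Finset.mem_Icc.mp hj₀).2,
      int_affine_hat M j₁ hM (Finset.mem_Icc.mp hj₁).1 (Finset.mem_Icc.mp hj₁).2,
      int_affine_hat M j₂ hM (Finset.mem_Icc.mp hj₂).1 (Finset.mem_Icc.mp hj₂).2]
    linear_combination hmom / (M:ℝ)
  exact stepC_core M hM ψ ψ' ψ'' hψc hψ'c hψ'' hftc1 hftc2 i G hGcont hGsupp hGbd c hcA hmomI
/-- For `ψ ∈ H²(0,1) ∩ H₀¹(0,1)` with `L²` projection `Pψ = Σ ξⁱvⁱ` onto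
the piecewise linear finite element space (characterized by `(ψ - Pψ, vⁱ) = 0`),
`(Δx Σ (D²ξ)ᵢ²)^{1/2} ≤ C ‖ψ''‖_{L²}` with `C` independent of `Δx`.  Membership of `ψ`
in `H² ∩ H₀¹` is expressed by absolute continuity of `ψ` and `ψ'` (via the fundamental
theorem of calculus) together with `ψ'' ∈ L²` and the Dirichlet boundary values. -/
theorem stmt11 : ∃ C : ℝ, 0 < C ∧
    ∀ M : ℕ, 2 ≤ M → ∀ ξ : ℕ → ℝ, ξ 0 = 0 → (∀ i, M ≤ i → ξ i = 0) →
    ∀ ψ ψ' ψ'' : ℝ → ℝ,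
      ψ 0 = 0 → ψ 1 = 0 →
      ContinuousOn ψ (Set.Icc 0 1) → ContinuousOn ψ' (Set.Icc 0 1) →
      IntegrableOn ψ'' (Set.Icc 0 1) →
      IntegrableOn (fun x => (ψ'' x) ^ 2) (Set.Icc 0 1) →
      (∀ a ∈ Set.Icc (0 : ℝ) 1, ∀ b ∈ Set.Icc (0 : ℝ) 1,
        ψ b - ψ a = ∫ x in a..b, ψ' x) →
      (∀ a ∈ Set.Icc (0 : ℝ) 1, ∀ b ∈ Set.Icc (0 : ℝ) 1,
        ψ' b - ψ' a = ∫ x in a..b, ψ'' x) →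
      (∀ i ∈ Finset.Icc 1 (M - 1),
        (∫ x in (0 : ℝ)..1, ψ x * hatFn M i x) = ∫ x in (0 : ℝ)..1, plf M ξ x * hatFn M i x) →
      Real.sqrt ((1 / (M : ℝ)) * ∑ i ∈ Finset.Icc 1 (M - 1), (d2q M ξ i) ^ 2)
        ≤ C * Real.sqrt (∫ x in (0 : ℝ)..1, (ψ'' x) ^ 2) := by
  refine ⟨215, by norm_num, ?_⟩
  intro M hM ξ hξ0 hξM ψ ψ' ψ'' hψ0 hψ1 hψc hψ'c hψ''i hψ''sq hftc1 hftc2 hproj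
  classical
  have hMnat : 0 < M := by omega
  have hMpos : (0:ℝ) < M := by exact_mod_cast hMnat
  have hM0 : (M:ℝ) ≠ 0 := ne_of_gt hMpos
  set I := Finset.Icc 1 (M-1) with hI
  set q' : ℕ → ℝ := fun j => if j ∈ I then ∫ x in (0:ℝ)..1, ψ x * hatFn M j x else 0 with hq'def
  set e : ℕ → ℝ := fun j => if j ∈ I then d2q M ξ j else 0 with hedef
  set A : ℕ → Set ℝ := fun i => Set.Icc (0:ℝ) 1 ∩ Set.Icc (((i:ℝ)-2)/M) (((i:ℝ)+2)/M) with hAdef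
  set L : ℕ → ℝ := fun i => ∫ s in A i, |ψ'' s| with hLdef
  set sg : ℕ → ℝ := fun i => ∫ s in A i, (ψ'' s)^2 with hsgdef
  have hqval : ∀ j, q' j = if j ∈ I then (ξ (j-1) + 4*ξ j + ξ (j+1))/(6*(M:ℝ)) else 0 := by
    intro j
    by_cases hj : j ∈ I
    · simp only [hq'def, if_pos hj]
      rw [hproj j hj, mass M hM ξ hξ0 hξM j hj]
    · simp only [hq'def, if_neg hj]
  have heval : ∀ j, e j = if j ∈ I then (M:ℝ)^2*(ξ (j+1) - 2*ξ j + ξ (j-1)) else 0 := fun j => rfl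
  have hr : ∀ i ∈ I, (e (i-1) + 4*e i + e (i+1))/6 = (M:ℝ)^3 * (q' (i+1) - 2*q' i + q' (i-1)) :=
    fun i hi => stepB M hM ξ hξ0 hξM q' e hqval heval i hi
  have hA_meas : ∀ i : ℕ, MeasurableSet (A i) := fun i => measurableSet_Icc.inter measurableSet_Icc
  have hA_sub : ∀ i : ℕ, A i ⊆ Set.Icc 0 1 := fun i => Set.inter_subset_left
  have hA_conn : ∀ i : ℕ, (A i).OrdConnected :=
    fun i => Set.ordConnected_Icc.inter Set.ordConnected_Icc
  have hL0 : ∀ i : ℕ, 0 ≤ L i := fun i => integral_nonneg (fun s => abs_nonneg _)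
  have hq'in : ∀ j, j ∈ I → q' j = ∫ x in (0:ℝ)..1, ψ x * hatFn M j x := by
    intro j hj; simp only [hq'def]; rw [if_pos hj]
  have hq'out : ∀ j, j ∉ I → q' j = 0 := by
    intro j hj; simp only [hq'def]; rw [if_neg hj]
  -- Step C : the per-index estimate
  have ht : ∀ i ∈ I, |q' (i+1) - 2*q' i + q' (i-1)| ≤ 16/(M:ℝ)^2 * L i := by
    intro i hi
    obtain ⟨hi1, hi2⟩ := Finset.mem_Icc.mp hi
    by_cases h1 : i = 1 <;> by_cases h2 : i = M - 1
    · -- M = 2, i = 1 : special case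
      have hM2 : M = 2 := by omega
      have hMr : (M:ℝ) = 2 := by rw [hM2]; norm_num
      subst h1
      rw [show (1:ℕ)-1 = 0 from rfl]
      rw [hq'out 0 (by rw [hI, Finset.mem_Icc]; omega),
        hq'out (1+1) (by rw [hI, Finset.mem_Icc]; omega), hq'in 1 hi]
      have hlow : ((((1:ℕ)):ℝ)-2)/(M:ℝ) = -(1/2) := by rw [hMr]; norm_num
      have hhigh : ((((1:ℕ)):ℝ)+2)/(M:ℝ) = 3/2 := by rw [hMr]; norm_num
      have h0A : (0:ℝ) ∈ A 1 :=
        ⟨⟨le_refl 0, zero_le_one⟩, Set.mem_Icc.mpr ⟨by rw [hlow]; norm_num, by rw [hhigh]; norm_num⟩⟩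
      have h1A : (1:ℝ) ∈ A 1 :=
        ⟨⟨zero_le_one, le_refl 1⟩, Set.mem_Icc.mpr ⟨by rw [hlow]; norm_num, by rw [hhigh]; norm_num⟩⟩
      have hψbd : ∀ x ∈ Set.Icc (0:ℝ) 1, |ψ x| ≤ 2 * L 1 := by
        intro x hx
        obtain ⟨hx0, hx1⟩ := hx
        have hxA : x ∈ A 1 :=
          ⟨⟨hx0, hx1⟩, Set.mem_Icc.mpr ⟨by rw [hlow]; linarith, by rw [hhigh]; linarith⟩⟩
        have T1 := taylor_bound ψ ψ' ψ'' hψ'c hψ''i hftc1 hftc2 (A 1) (hA_sub 1) (hA_conn 1)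
          h0A hxA
        have T2 := taylor_bound ψ ψ' ψ'' hψ'c hψ''i hftc1 hftc2 (A 1) (hA_sub 1) (hA_conn 1)
          h0A h1A
        have hLr : (∫ s in A 1, |ψ'' s|) = L 1 := rfl
        rw [hLr] at T1 T2
        have e1 : ψ x - ψ 0 - ψ' 0*(x - 0) = ψ x - ψ' 0*x := by rw [hψ0]; ring
        have e2 : ψ 1 - ψ 0 - ψ' 0*(1 - 0) = -(ψ' 0) := by rw [hψ0, hψ1]; ring
        rw [e1] at T1
        rw [e2, abs_neg] at T2
        have hx01 : |x - (0:ℝ)| ≤ 1 := by rw [sub_zero, abs_of_nonneg hx0]; exact hx1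
        have h10 : |(1:ℝ) - 0| = 1 := by norm_num
        rw [h10, one_mul] at T2
        have hT1' : |ψ x - ψ' 0*x| ≤ L 1 := by
          calc |ψ x - ψ' 0*x| ≤ |x - 0| * L 1 := T1
            _ ≤ 1 * L 1 := mul_le_mul_of_nonneg_right hx01 (hL0 1)
            _ = L 1 := one_mul _
        calc |ψ x| = |(ψ x - ψ' 0*x) + ψ' 0*x| := by congr 1; ring
          _ ≤ |ψ x - ψ' 0*x| + |ψ' 0*x| := abs_add_le _ _
          _ ≤ L 1 + |ψ' 0| * |x| := by rw [abs_mul]; linarith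
          _ ≤ L 1 + L 1 * 1 := by
              apply add_le_add le_rfl
              apply mul_le_mul T2 (by rwa [sub_zero] at hx01) (abs_nonneg x) (hL0 1)
          _ = 2 * L 1 := by ring
      have hQ : |∫ x in (0:ℝ)..1, ψ x * hatFn M 1 x| ≤ (2*L 1)*(1/(M:ℝ)) := by
        have hh1 : |∫ x in (0:ℝ)..1, ψ x * hatFn M 1 x|
            ≤ ∫ x in (0:ℝ)..1, |ψ x| * |hatFn M 1 x| := by
          simpa [Real.norm_eq_abs, abs_mul] using
            intervalIntegral.norm_integral_le_integral_norm
              (f := fun x => ψ x * hatFn M 1 x) (μ := volume) zero_le_one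
        have hh2 : (∫ x in (0:ℝ)..1, |ψ x| * |hatFn M 1 x|)
            ≤ ∫ x in (0:ℝ)..1, (2*L 1) * hatFn M 1 x := by
          apply intervalIntegral.integral_mono_on zero_le_one
          · apply ContinuousOn.intervalIntegrable
            rw [Set.uIcc_of_le zero_le_one]
            exact hψc.abs.mul (hat_cont M 1).abs.continuousOn
          · exact (continuous_const.mul (hat_cont M 1)).intervalIntegrable _ _
          · intro x hx
            rw [abs_of_nonneg (hat_nonneg M 1 x)]
            exact mul_le_mul_of_nonneg_right (hψbd x hx) (hat_nonneg M 1 x)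
        have hh3 : (∫ x in (0:ℝ)..1, (2*L 1) * hatFn M 1 x) = (2*L 1)*(1/(M:ℝ)) := by
          rw [intervalIntegral.integral_const_mul, int_hat M 1 hM (le_refl 1) (by omega)]
        linarith
      have habs2 : |0 - 2*(∫ x in (0:ℝ)..1, ψ x * hatFn M 1 x) + 0|
          = 2*|∫ x in (0:ℝ)..1, ψ x * hatFn M 1 x| := by
        rw [show (0:ℝ) - 2*(∫ x in (0:ℝ)..1, ψ x * hatFn M 1 x) + 0
          = (-2)*(∫ x in (0:ℝ)..1, ψ x * hatFn M 1 x) from by ring, abs_mul]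
        norm_num
      rw [habs2]
      calc 2*|∫ x in (0:ℝ)..1, ψ x * hatFn M 1 x| ≤ 2*((2*L 1)*(1/(M:ℝ))) := by linarith
        _ ≤ 16/(M:ℝ)^2 * L 1 := by
            rw [hMr]
            norm_num
            linarith [hL0 1]
    · -- i = 1, 3 ≤ M
      have hM3 : 3 ≤ M := by omega
      subst h1
      rw [show (1:ℕ)-1 = 0 from rfl]
      rw [hq'out 0 (by rw [hI, Finset.mem_Icc]; omega),
        hq'in (1+1) (by rw [hI, Finset.mem_Icc]; omega), hq'in 1 hi]
      have hcA : (0:ℝ) ∈ Set.Icc (0:ℝ) 1 ∩ Set.Icc (((((1:ℕ)):ℝ)-2)/M) (((((1:ℕ)):ℝ)+2)/M) := by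
        refine ⟨⟨le_refl 0, zero_le_one⟩, Set.mem_Icc.mpr ⟨?_, ?_⟩⟩
        · apply div_nonpos_of_nonpos_of_nonneg
          · push_cast; norm_num
          · linarith
        · positivity
      have hmomalg : (0:ℝ)*((ψ 0 - ψ' 0*0) + ψ' 0*(((1:ℕ)):ℝ)/M)
          + (-2)*((ψ 0 - ψ' 0*0) + ψ' 0*(((1:ℕ)):ℝ)/M)
          + 1*((ψ 0 - ψ' 0*0) + ψ' 0*(((2:ℕ)):ℝ)/M) = 0 := by
        rw [hψ0]; push_cast; ring
      have hcomb := stepC_comb M hM ψ ψ' ψ'' hψc hψ'c hψ''i hftc1 hftc2 1 1 1 2 0 (-2) 1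
        (by rw [Finset.mem_Icc]; omega) (by rw [Finset.mem_Icc]; omega)
        (by rw [Finset.mem_Icc]; omega)
        ⟨by push_cast; norm_num, by push_cast; norm_num⟩
        ⟨by push_cast; norm_num, by push_cast; norm_num⟩
        ⟨by push_cast; norm_num, by push_cast; norm_num⟩
        (by norm_num) 0 hcA hmomalg
      rw [int_mul_comb ψ hψc M 1 1 2 0 (-2) 1] at hcomb
      have harg : (∫ x in (0:ℝ)..1, ψ x * hatFn M (1+1) x)
            - 2*(∫ x in (0:ℝ)..1, ψ x * hatFn M 1 x) + 0
          = 0*(∫ x in (0:ℝ)..1, ψ x * hatFn M 1 x)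
            + (-2)*(∫ x in (0:ℝ)..1, ψ x * hatFn M 1 x)
            + 1*(∫ x in (0:ℝ)..1, ψ x * hatFn M 2 x) := by
        norm_num
        ring
      rw [harg]
      exact hcomb
    · -- i = M - 1, 3 ≤ M
      have hM3 : 3 ≤ M := by omega
      have hi2' : 2 ≤ i := by omega
      have hiM : (i:ℝ) = (M:ℝ) - 1 := by
        rw [h2, Nat.cast_sub (by omega : 1 ≤ M), Nat.cast_one]
      have hci : (((i-1:ℕ)):ℝ) = (i:ℝ) - 1 := by
        rw [Nat.cast_sub hi1, Nat.cast_one]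
      rw [hq'out (i+1) (by rw [hI, Finset.mem_Icc]; omega), hq'in i hi,
        hq'in (i-1) (by rw [hI, Finset.mem_Icc]; omega)]
      have hcA : (1:ℝ) ∈ Set.Icc (0:ℝ) 1 ∩ Set.Icc (((i:ℝ)-2)/M) (((i:ℝ)+2)/M) := by
        refine ⟨⟨zero_le_one, le_refl 1⟩, Set.mem_Icc.mpr ⟨?_, ?_⟩⟩
        · rw [div_le_one hMpos]; linarith
        · rw [le_div_iff₀ hMpos]; linarith
      have hmomalg : (1:ℝ)*((ψ 1 - ψ' 1*1) + ψ' 1*(((i-1:ℕ)):ℝ)/M)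
          + (-2)*((ψ 1 - ψ' 1*1) + ψ' 1*((i:ℕ):ℝ)/M)
          + 0*((ψ 1 - ψ' 1*1) + ψ' 1*((i:ℕ):ℝ)/M) = 0 := by
        rw [hψ1, hci, hiM]
        field_simp
        ring
      have hcomb := stepC_comb M hM ψ ψ' ψ'' hψc hψ'c hψ''i hftc1 hftc2 i (i-1) i i 1 (-2) 0
        (by rw [Finset.mem_Icc]; omega) (by rw [Finset.mem_Icc]; omega)
        (by rw [Finset.mem_Icc]; omega)
        ⟨by rw [hci], by rw [hci]; linarith⟩
        ⟨by linarith, by linarith⟩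
        ⟨by linarith, by linarith⟩
        (by norm_num) 1 hcA hmomalg
      rw [int_mul_comb ψ hψc M (i-1) i i 1 (-2) 0] at hcomb
      have harg : (0:ℝ) - 2*(∫ x in (0:ℝ)..1, ψ x * hatFn M i x)
            + (∫ x in (0:ℝ)..1, ψ x * hatFn M (i-1) x)
          = 1*(∫ x in (0:ℝ)..1, ψ x * hatFn M (i-1) x)
            + (-2)*(∫ x in (0:ℝ)..1, ψ x * hatFn M i x)
            + 0*(∫ x in (0:ℝ)..1, ψ x * hatFn M i x) := by
        ring
      rw [harg]
      exact hcomb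
    · -- 2 ≤ i ≤ M - 2
      have hii1 : 2 ≤ i := by omega
      have hii2 : i + 1 ≤ M - 1 := by omega
      have hci : (((i-1:ℕ)):ℝ) = (i:ℝ) - 1 := by
        rw [Nat.cast_sub hi1, Nat.cast_one]
      have hiM' : (i:ℝ) ≤ (M:ℝ) - 1 := by
        have : i + 1 ≤ M := by omega
        have h' : (i:ℝ) + 1 ≤ (M:ℝ) := by exact_mod_cast this
        linarith
      rw [hq'in (i+1) (by rw [hI, Finset.mem_Icc]; omega), hq'in i hi,
        hq'in (i-1) (by rw [hI, Finset.mem_Icc]; omega)]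
      have hcA : ((i:ℝ)/M) ∈ Set.Icc (0:ℝ) 1 ∩ Set.Icc (((i:ℝ)-2)/M) (((i:ℝ)+2)/M) := by
        refine ⟨⟨by positivity, ?_⟩, Set.mem_Icc.mpr ⟨?_, ?_⟩⟩
        · rw [div_le_one hMpos]; linarith
        · rw [div_le_div_iff₀ hMpos hMpos]; nlinarith
        · rw [div_le_div_iff₀ hMpos hMpos]; nlinarith
      have hmomalg : (1:ℝ)*((ψ ((i:ℝ)/M) - ψ' ((i:ℝ)/M)*((i:ℝ)/M)) + ψ' ((i:ℝ)/M)*(((i-1:ℕ)):ℝ)/M)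
          + (-2)*((ψ ((i:ℝ)/M) - ψ' ((i:ℝ)/M)*((i:ℝ)/M)) + ψ' ((i:ℝ)/M)*((i:ℕ):ℝ)/M)
          + 1*((ψ ((i:ℝ)/M) - ψ' ((i:ℝ)/M)*((i:ℝ)/M)) + ψ' ((i:ℝ)/M)*(((i+1:ℕ)):ℝ)/M) = 0 := by
        rw [hci]
        push_cast
        ring
      have hcomb := stepC_comb M hM ψ ψ' ψ'' hψc hψ'c hψ''i hftc1 hftc2 i (i-1) i (i+1)
        1 (-2) 1
        (by rw [Finset.mem_Icc]; omega) (by rw [Finset.mem_Icc]; omega)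
        (by rw [Finset.mem_Icc]; omega)
        ⟨by rw [hci], by rw [hci]; linarith⟩
        ⟨by linarith, by linarith⟩
        ⟨by push_cast; linarith, by push_cast; linarith⟩
        (by norm_num) ((i:ℝ)/M) hcA hmomalg
      rw [int_mul_comb ψ hψc M (i-1) i (i+1) 1 (-2) 1] at hcomb
      have harg : (∫ x in (0:ℝ)..1, ψ x * hatFn M (i+1) x)
            - 2*(∫ x in (0:ℝ)..1, ψ x * hatFn M i x)
            + (∫ x in (0:ℝ)..1, ψ x * hatFn M (i-1) x)
          = 1*(∫ x in (0:ℝ)..1, ψ x * hatFn M (i-1) x)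
            + (-2)*(∫ x in (0:ℝ)..1, ψ x * hatFn M i x)
            + 1*(∫ x in (0:ℝ)..1, ψ x * hatFn M (i+1) x) := by
        ring
      rw [harg]
      exact hcomb
  -- L² ≤ (4/M)·σ
  have hLσ : ∀ i : ℕ, (L i)^2 ≤ (4/(M:ℝ)) * sg i := by
    intro i
    have h1 := l1_le_l2 ψ'' (A i) (hA_meas i) (hA_sub i) hψ''i hψ''sq
    have hid : ((i:ℝ)+2)/M - ((i:ℝ)-2)/M = 4/(M:ℝ) := by
      rw [div_sub_div_same]; norm_num
    have hV : (volume (A i)).toReal ≤ 4/(M:ℝ) := by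
      have h2 : volume (A i) ≤ volume (Set.Icc (((i:ℝ)-2)/M) (((i:ℝ)+2)/M)) :=
        measure_mono Set.inter_subset_right
      rw [Real.volume_Icc, hid] at h2
      calc (volume (A i)).toReal ≤ (ENNReal.ofReal (4/(M:ℝ))).toReal :=
          ENNReal.toReal_mono ENNReal.ofReal_ne_top h2
        _ = 4/(M:ℝ) := ENNReal.toReal_ofReal (by positivity)
    have hσ0 : 0 ≤ sg i := integral_nonneg (fun s => sq_nonneg _)
    calc (L i)^2 ≤ (volume (A i)).toReal * sg i := h1
      _ ≤ (4/(M:ℝ)) * sg i := mul_le_mul_of_nonneg_right hV hσ0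
  -- r² ≤ 1024·M·σ
  have hsq : ∀ i ∈ I, ((e (i-1) + 4*e i + e (i+1))/6)^2 ≤ 1024*(M:ℝ)*sg i := by
    intro i hi
    rw [hr i hi]
    have habs := ht i hi
    have h1 : (q' (i+1) - 2*q' i + q' (i-1))^2 ≤ (16/(M:ℝ)^2 * L i)^2 := by
      rw [← sq_abs (q' (i+1) - 2*q' i + q' (i-1))]
      apply pow_le_pow_left₀ (abs_nonneg _) habs
    calc ((M:ℝ)^3 * (q' (i+1) - 2*q' i + q' (i-1)))^2
        = (M:ℝ)^6 * (q' (i+1) - 2*q' i + q' (i-1))^2 := by ring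
      _ ≤ (M:ℝ)^6 * (16/(M:ℝ)^2 * L i)^2 := mul_le_mul_of_nonneg_left h1 (by positivity)
      _ = 256*(M:ℝ)^2 * (L i)^2 := by field_simp; ring
      _ ≤ 256*(M:ℝ)^2 * ((4/(M:ℝ)) * sg i) := mul_le_mul_of_nonneg_left (hLσ i) (by positivity)
      _ = 1024*(M:ℝ)*sg i := by field_simp; ring
  have hdisc := discrete_bound M hM e (fun i hi => by simp only [hedef]; rw [if_neg hi])
  have hover := overlap_bound M hM (fun x => (ψ'' x)^2) hψ''sq (fun x => sq_nonneg _)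
  have hσsum : ∑ i ∈ I, sg i ≤ 5 * ∫ x in Set.Icc (0:ℝ) 1, (ψ'' x)^2 := hover
  have hJrw : (∫ x in Set.Icc (0:ℝ) 1, (ψ'' x)^2) = ∫ x in (0:ℝ)..1, (ψ'' x)^2 := by
    rw [intervalIntegral.integral_of_le zero_le_one, MeasureTheory.integral_Icc_eq_integral_Ioc]
  have hchain : ∑ i ∈ I, (e i)^2 ≤ 46080*(M:ℝ) * ∫ x in (0:ℝ)..1, (ψ'' x)^2 := by
    calc ∑ i ∈ I, (e i)^2 ≤ 9 * ∑ i ∈ I, ((e (i-1) + 4*e i + e (i+1))/6)^2 := hdisc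
      _ ≤ 9 * (1024*(M:ℝ) * ∑ i ∈ I, sg i) := by
          apply mul_le_mul_of_nonneg_left _ (by norm_num)
          rw [Finset.mul_sum]
          exact Finset.sum_le_sum hsq
      _ ≤ 9 * (1024*(M:ℝ) * (5 * ∫ x in Set.Icc (0:ℝ) 1, (ψ'' x)^2)) := by
          apply mul_le_mul_of_nonneg_left _ (by norm_num)
          exact mul_le_mul_of_nonneg_left hσsum (by positivity)
      _ = 46080*(M:ℝ) * ∫ x in (0:ℝ)..1, (ψ'' x)^2 := by rw [hJrw]; ring
  have hEe : ∑ i ∈ I, (d2q M ξ i)^2 = ∑ i ∈ I, (e i)^2 :=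
    Finset.sum_congr rfl (fun i hi => by simp only [hedef]; rw [if_pos hi])
  have hfin : (1/(M:ℝ)) * ∑ i ∈ I, (d2q M ξ i)^2 ≤ 46080 * ∫ x in (0:ℝ)..1, (ψ'' x)^2 := by
    rw [hEe]
    calc (1/(M:ℝ)) * ∑ i ∈ I, (e i)^2
        ≤ (1/(M:ℝ)) * (46080*(M:ℝ) * ∫ x in (0:ℝ)..1, (ψ'' x)^2) :=
          mul_le_mul_of_nonneg_left hchain (by positivity)
      _ = 46080 * ∫ x in (0:ℝ)..1, (ψ'' x)^2 := by field_simp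
  calc Real.sqrt ((1/(M:ℝ)) * ∑ i ∈ I, (d2q M ξ i)^2)
      ≤ Real.sqrt (46080 * ∫ x in (0:ℝ)..1, (ψ'' x)^2) := Real.sqrt_le_sqrt hfin
    _ = Real.sqrt 46080 * Real.sqrt (∫ x in (0:ℝ)..1, (ψ'' x)^2) :=
        Real.sqrt_mul (by norm_num) _
    _ ≤ 215 * Real.sqrt (∫ x in (0:ℝ)..1, (ψ'' x)^2) := by
        apply mul_le_mul_of_nonneg_right _ (Real.sqrt_nonneg _)
        rw [show (215:ℝ) = Real.sqrt (215^2) from (Real.sqrt_sq (by norm_num)).symm]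
        apply Real.sqrt_le_sqrt
        norm_num
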